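/- Let X be a Q-set (every subset of X is a relative G_δ), let X′ be a disjoint copy of X with bijection p ↦ p′, and topologize Y = X ∪ X′ by declaring open exactly the sets U ∪ V′ where U, V ⊆ X are open in X and U ⊆ V. Then Y is a T₀ space, and for subsets A, B ⊆ X: the set A ∪ B′ is G_δ in Y iff A ⊆ B; moreover A ∪ (A ∪ B)′ is the minimal G_δ subset of Y containing A ∪ B′. -/

import Mathlib

/- DOUBLETOP -/
/-- The "double" of a space `X`: `Y = X ∪ X′` (coded as `X ⊕ X`, with `Sum.inl`
the original copy and `Sum.inr` the primed copy), where the open sets are exactly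
the sets `U ∪ V′` with `U, V` open in `X` and `U ⊆ V`. -/
def doubleTop (X : Type*) [TopologicalSpace X] : TopologicalSpace (X ⊕ X) where
  IsOpen S := IsOpen (Sum.inl ⁻¹' S : Set X) ∧ IsOpen (Sum.inr ⁻¹' S : Set X) ∧
    (Sum.inl ⁻¹' S : Set X) ⊆ (Sum.inr ⁻¹' S : Set X)
  isOpen_univ := ⟨isOpen_univ, isOpen_univ, subset_rfl⟩
  isOpen_inter := fun s t hs ht =>
    ⟨hs.1.inter ht.1, hs.2.1.inter ht.2.1, fun x hx => ⟨hs.2.2 hx.1, ht.2.2 hx.2⟩⟩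
  isOpen_sUnion := fun S hS => by
    refine ⟨?_, ?_, ?_⟩
    · rw [Set.preimage_sUnion]
      exact isOpen_biUnion fun s hs => (hS s hs).1
    · rw [Set.preimage_sUnion]
      exact isOpen_biUnion fun s hs => (hS s hs).2.1
    · rw [Set.preimage_sUnion, Set.preimage_sUnion]
      exact Set.iUnion₂_mono fun s hs => (hS s hs).2.2

section aux
variable {X : Type*} [TopologicalSpace X]

omit [TopologicalSpace X] in
lemma pre_inl (A B : Set X) : Sum.inl ⁻¹' (Sum.inl '' A ∪ Sum.inr '' B) = A := by
  ext x; simp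

omit [TopologicalSpace X] in
lemma pre_inr (A B : Set X) : Sum.inr ⁻¹' (Sum.inl '' A ∪ Sum.inr '' B) = B := by
  ext x; simp

lemma key_open {A B : Set X} {W : Set (X ⊕ X)} (hW : @IsOpen _ (doubleTop X) W)
    (hsub : Sum.inl '' A ∪ Sum.inr '' B ⊆ W) :
    Sum.inl '' A ∪ Sum.inr '' (A ∪ B) ⊆ W := by
  obtain ⟨-, -, h12⟩ := hW
  rintro z (⟨x, hx, rfl⟩ | ⟨x, hx, rfl⟩)
  · exact hsub (Or.inl ⟨x, hx, rfl⟩)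
  · rcases hx with hx | hx
    · exact h12 (hsub (Or.inl ⟨x, hx, rfl⟩))
    · exact hsub (Or.inr ⟨x, hx, rfl⟩)

omit [TopologicalSpace X] in
lemma iInter_split (P Q : ℕ → Set X) :
    (⋂ n, (Sum.inl '' (P n) ∪ Sum.inr '' (Q n))) =
      Sum.inl '' (⋂ n, P n) ∪ Sum.inr '' (⋂ n, Q n) := by
  ext z
  cases z <;> simp

end aux

theorem stmt15 {X : Type*} [TopologicalSpace X] [T0Space X]
    (hQ : ∀ A : Set X, IsGδ A) :
    @T0Space (X ⊕ X) (doubleTop X) ∧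
    ∀ A B : Set X,
      (@IsGδ (X ⊕ X) (doubleTop X) (Sum.inl '' A ∪ Sum.inr '' B) ↔ A ⊆ B) ∧
      (@IsGδ (X ⊕ X) (doubleTop X) (Sum.inl '' A ∪ Sum.inr '' (A ∪ B)) ∧
        Sum.inl '' A ∪ Sum.inr '' B ⊆ Sum.inl '' A ∪ Sum.inr '' (A ∪ B) ∧
        ∀ Q : Set (X ⊕ X), @IsGδ (X ⊕ X) (doubleTop X) Q →
          Sum.inl '' A ∪ Sum.inr '' B ⊆ Q →
          Sum.inl '' A ∪ Sum.inr '' (A ∪ B) ⊆ Q) := by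
  letI : TopologicalSpace (X ⊕ X) := doubleTop X
  have open_pair : ∀ U : Set X, IsOpen U → IsOpen (Sum.inl '' U ∪ Sum.inr '' U) := by
    intro U hU
    exact ⟨by rwa [pre_inl], by rwa [pre_inr], by rw [pre_inl, pre_inr]⟩
  have gdelta_of_sub : ∀ A B : Set X, A ⊆ B → IsGδ (Sum.inl '' A ∪ Sum.inr '' B) := by
    intro A B hAB
    obtain ⟨f, hf, hfA⟩ := isGδ_iff_eq_iInter_nat.1 (hQ A)
    obtain ⟨g, hg, hgB⟩ := isGδ_iff_eq_iInter_nat.1 (hQ B)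
    rw [isGδ_iff_eq_iInter_nat]
    refine ⟨fun n => Sum.inl '' (f n ∩ g n) ∪ Sum.inr '' (g n), fun n => ?_, ?_⟩
    · show IsOpen (Sum.inl '' (f n ∩ g n) ∪ Sum.inr '' (g n))
      refine ⟨?_, ?_, ?_⟩
      · rw [pre_inl]; exact (hf n).inter (hg n)
      · rw [pre_inr]; exact hg n
      · rw [pre_inl, pre_inr]; exact Set.inter_subset_right
    · rw [iInter_split, Set.iInter_inter_distrib, ← hfA, ← hgB,
        Set.inter_eq_left.2 hAB]
  refine ⟨?_, fun A B => ⟨⟨?_, fun h => gdelta_of_sub A B h⟩, ?_, ?_, ?_⟩⟩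
  · -- T0
    refine ⟨fun x y h => ?_⟩
    rw [inseparable_iff_forall_isOpen] at h
    have hrange : IsOpen (Set.range (Sum.inr : X → X ⊕ X)) := by
      refine ⟨?_, ?_, ?_⟩
      · convert isOpen_empty
        ext x; simp
      · convert isOpen_univ
        ext x; simp
      · intro x hx; simp at hx
    cases x with
    | inl x =>
      cases y with
      | inl y =>
        have hxy : x = y := Inseparable.eq <| inseparable_iff_forall_isOpen.2 fun U hU => by
          simpa using h (Sum.inl '' U ∪ Sum.inr '' U) (open_pair U hU)
        rw [hxy]
      | inr y =>
        exact absurd ((h _ hrange).2 ⟨y, rfl⟩) (by simp)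
    | inr x =>
      cases y with
      | inl y =>
        exact absurd ((h _ hrange).1 ⟨x, rfl⟩) (by simp)
      | inr y =>
        have hxy : x = y := Inseparable.eq <| inseparable_iff_forall_isOpen.2 fun U hU => by
          simpa using h (Sum.inl '' U ∪ Sum.inr '' U) (open_pair U hU)
        rw [hxy]
  · -- Gδ → A ⊆ B
    rintro ⟨T, hTo, -, hTs⟩ x hx
    have hmem : (Sum.inr x : X ⊕ X) ∈ ⋂₀ T := by
      intro t ht
      have hsub : Sum.inl '' A ∪ Sum.inr '' B ⊆ t := hTs ▸ Set.sInter_subset_of_mem ht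
      exact (hTo t ht).2.2 (hsub (Or.inl ⟨x, hx, rfl⟩))
    rw [← hTs] at hmem
    rcases hmem with ⟨y, -, hy⟩ | ⟨y, hy, hyx⟩
    · exact absurd hy (by simp)
    · rw [Sum.inr.injEq] at hyx
      exact hyx ▸ hy
  · exact gdelta_of_sub A (A ∪ B) Set.subset_union_left
  · exact Set.union_subset_union_right _ (Set.image_mono Set.subset_union_right)
  · rintro Q ⟨T, hTo, -, rfl⟩ hsub
    exact Set.subset_sInter fun t ht =>
      key_open (hTo t ht) (hsub.trans (Set.sInter_subset_of_mem ht))
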